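/- There is a universal constant C > 0 with the following property. Let X be a Banach space, π an action of ℍ on X by linear isometric automorphisms, and f : ℍ → X a 1-Lipschitz 1-cocycle for π. Then for every m, n ∈ ℕ: ‖P_m f(c^{n²})‖ ≤ C · n^{5/3} / 2^{m/3}. -/
import Mathlib
set_option maxHeartbeats 800000


open scoped BigOperators

/-- The discrete Heisenberg group `ℍ`, realized via the coordinates of the
3×3 upper-triangular integer matrices `[[1, x, z], [0, 1, y], [0, 0, 1]]`
with unit diagonal. -/
@[ext] structure Heis where
  x : ℤ
  y : ℤ
  z : ℤ

namespace Heis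

instance : One Heis := ⟨⟨0, 0, 0⟩⟩
instance : Mul Heis := ⟨fun g h => ⟨g.x + h.x, g.y + h.y, g.z + h.z + g.x * h.y⟩⟩
instance : Inv Heis := ⟨fun g => ⟨-g.x, -g.y, -g.z + g.x * g.y⟩⟩

@[simp] lemma mul_def (g h : Heis) :
    g * h = ⟨g.x + h.x, g.y + h.y, g.z + h.z + g.x * h.y⟩ := rfl
@[simp] lemma one_def : (1 : Heis) = ⟨0, 0, 0⟩ := rfl
@[simp] lemma inv_def (g : Heis) : g⁻¹ = ⟨-g.x, -g.y, -g.z + g.x * g.y⟩ := rfl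

instance : Group Heis where
  mul_assoc g h k := by ext <;> simp <;> ring
  one_mul g := by ext <;> simp
  mul_one g := by ext <;> simp
  inv_mul_cancel g := by ext <;> simp <;> ring

/-- The generator `a`. -/
def A : Heis := ⟨1, 0, 0⟩
/-- The generator `b`. -/
def B : Heis := ⟨0, 1, 0⟩
/-- The commutator `c = a * b * a⁻¹ * b⁻¹`, a central element. -/
def C : Heis := A * B * A⁻¹ * B⁻¹
/-- The symmetric generating set `S = {a, b, a⁻¹, b⁻¹}`. -/
def S : Set Heis := {A, B, A⁻¹, B⁻¹}

/-- The word length of `g` with respect to the generating set `S`. -/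
noncomputable def wordLength (g : Heis) : ℕ :=
  sInf {n : ℕ | ∃ l : List Heis, l.length = n ∧ (∀ s ∈ l, s ∈ S) ∧ l.prod = g}

/-- The left-invariant word metric `d_W` on `ℍ` associated to `S`. -/
noncomputable def dW (g h : Heis) : ℕ := wordLength (g⁻¹ * h)

end Heis

namespace Heis

lemma C_eq : C = ⟨0, 0, 1⟩ := by
  show A * B * A⁻¹ * B⁻¹ = _
  ext <;> simp [A, B]

lemma C_pow (j : ℕ) : C ^ j = ⟨0, 0, (j : ℤ)⟩ := by
  induction j with
  | zero => simp
  | succ j ih => rw [pow_succ, ih, C_eq]; ext <;> simp <;> push_cast <;> ring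

lemma A_pow (p : ℕ) : A ^ p = ⟨(p : ℤ), 0, 0⟩ := by
  induction p with
  | zero => simp
  | succ p ih => rw [pow_succ, ih]; ext <;> simp [A] <;> push_cast <;> ring

lemma B_pow (p : ℕ) : B ^ p = ⟨0, (p : ℤ), 0⟩ := by
  induction p with
  | zero => simp
  | succ p ih => rw [pow_succ, ih]; ext <;> simp [B] <;> push_cast <;> ring

lemma A_inv_pow (p : ℕ) : A⁻¹ ^ p = ⟨-(p : ℤ), 0, 0⟩ := by
  rw [inv_pow, A_pow]; ext <;> simp

lemma B_inv_pow (p : ℕ) : B⁻¹ ^ p = ⟨0, -(p : ℤ), 0⟩ := by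
  rw [inv_pow, B_pow]; ext <;> simp

lemma wordLength_le (p q r : ℕ) :
    wordLength (C ^ (p * q + r)) ≤ 2 * p + 2 * q + 2 * r + 2 := by
  apply Nat.sInf_le
  refine ⟨List.replicate p A ++ List.replicate q B ++ List.replicate p A⁻¹ ++
    List.replicate q B⁻¹ ++ [A] ++ List.replicate r B ++ [A⁻¹] ++ List.replicate r B⁻¹,
    ?_, ?_, ?_⟩
  · simp; ring
  · intro s hs
    simp only [List.mem_append, List.mem_replicate, List.mem_singleton] at hs
    simp only [S, Set.mem_insert_iff, Set.mem_singleton_iff]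
    tauto
  · simp only [List.prod_append, List.prod_replicate, List.prod_singleton,
      A_pow, B_pow, A_inv_pow, B_inv_pow, C_pow]
    ext <;> simp [A, B] <;> push_cast <;> ring

lemma wordLength_C_pow_le (j : ℕ) :
    wordLength (C ^ j) ≤ 6 * (Nat.sqrt j + 1) := by
  set p := Nat.sqrt j + 1 with hp
  have hp0 : 0 < p := Nat.succ_pos _
  have hj : j < p * p := Nat.lt_succ_sqrt j
  have hq : j / p < p := (Nat.div_lt_iff_lt_mul hp0).mpr hj
  have hr : j % p < p := Nat.mod_lt _ hp0
  have hd : p * (j / p) + j % p = j := Nat.div_add_mod j p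
  calc wordLength (C ^ j) = wordLength (C ^ (p * (j / p) + j % p)) := by rw [hd]
    _ ≤ 2 * p + 2 * (j / p) + 2 * (j % p) + 2 := wordLength_le p (j / p) (j % p)
    _ ≤ 6 * (Nat.sqrt j + 1) := by omega

end Heis
/-- The averaging operator `P_n = 2^{−n}·∑_{j<2^n} π(c)^j` associated to an action `π` of
`ℍ` by linear isometric automorphisms, where `c = aba⁻¹b⁻¹`. -/
noncomputable def Pop {X : Type*} [NormedAddCommGroup X] [NormedSpace ℝ X]
    (π : Heis →* (X ≃ₗᵢ[ℝ] X)) (n : ℕ) (v : X) : X :=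
  ((2 : ℝ) ^ n)⁻¹ • ∑ j ∈ Finset.range (2 ^ n), (π Heis.C ^ j) v

/-- **Lemma 4.2.** There is a universal `C > 0` such that: for every Banach space `X`,
action `π` of `ℍ` on `X` by linear isometric automorphisms, and `1`-Lipschitz `1`-cocycle
`f : ℍ → X`, for all `m, n ∈ ℕ` we have `‖P_m f(c^{n²})‖ ≤ C·n^{5/3}/2^{m/3}`. -/
theorem heisenberg_cocycle_averaged_bound :
    ∃ C : ℝ, 0 < C ∧
      ∀ (X : Type*) [NormedAddCommGroup X] [NormedSpace ℝ X] [CompleteSpace X],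
        ∀ (π : Heis →* (X ≃ₗᵢ[ℝ] X)) (f : Heis → X),
          (∀ g h : Heis, f (g * h) = π g (f h) + f g) →
          (∀ g h : Heis, ‖f g - f h‖ ≤ (Heis.dW g h : ℝ)) →
          ∀ m n : ℕ, 1 ≤ m → 1 ≤ n →
            ‖Pop π m (f (Heis.C ^ (n ^ 2)))‖ ≤
              C * (n : ℝ) ^ ((5 : ℝ) / 3) / (2 : ℝ) ^ ((m : ℝ) / 3) := by
  refine ⟨30, by norm_num, ?_⟩
  intro X _ _ _ π f hcoc hlip m n hm hn
  have hf1 : f 1 = 0 := by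
    have h := hcoc 1 1
    simp only [one_mul, map_one, LinearIsometryEquiv.coe_one, id_eq] at h
    nth_rewrite 1 [← add_zero (f 1)] at h
    exact (add_left_cancel h).symm
  have hfg : ∀ g : Heis, ‖f g‖ ≤ (Heis.wordLength g : ℝ) := by
    intro g
    have h := hlip 1 g
    rw [hf1, zero_sub, norm_neg] at h
    simpa [Heis.dW] using h
  -- notation
  set k : ℕ := n ^ 2 with hk
  set N : ℕ := 2 ^ m with hN
  set G : ℕ → X := fun j => f (Heis.C ^ j) with hG
  have hGnorm : ∀ j : ℕ, ‖G j‖ ≤ 6 * ((Nat.sqrt j : ℝ) + 1) := by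
    intro j
    refine (hfg _).trans ?_
    have := Heis.wordLength_C_pow_le j
    calc (Heis.wordLength (Heis.C ^ j) : ℝ) ≤ ((6 * (Nat.sqrt j + 1) : ℕ) : ℝ) := by
          exact_mod_cast this
      _ = 6 * ((Nat.sqrt j : ℝ) + 1) := by push_cast; ring
  -- the Pop norm as explicit expression
  have hPop : ‖Pop π m (G k)‖ =
      ((2 : ℝ) ^ m)⁻¹ * ‖∑ j ∈ Finset.range N, (π Heis.C ^ j) (G k)‖ := by
    rw [Pop, norm_smul]
    congr 1
    simp [abs_of_pos]
  -- real-power bookkeeping via u, w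
  set ν : ℝ := (n : ℝ) with hν
  set t : ℝ := (2 : ℝ) ^ m with ht
  have hν0 : (0 : ℝ) < ν := by rw [hν]; have : 0 < n := hn; exact_mod_cast this
  have ht0 : (0 : ℝ) < t := by positivity
  have ht1 : (1 : ℝ) ≤ t := one_le_pow₀ (by norm_num)
  set u : ℝ := t ^ ((1 : ℝ) / 6) with hu
  set w : ℝ := ν ^ ((1 : ℝ) / 3) with hw
  have hu0 : (0 : ℝ) < u := Real.rpow_pos_of_pos ht0 _
  have hw0 : (0 : ℝ) < w := Real.rpow_pos_of_pos hν0 _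
  have hu6 : u ^ (6 : ℕ) = t := by
    rw [hu, ← Real.rpow_natCast (t ^ ((1:ℝ)/6)) 6, ← Real.rpow_mul ht0.le]
    norm_num
  have hw3 : w ^ (3 : ℕ) = ν := by
    rw [hw, ← Real.rpow_natCast (ν ^ ((1:ℝ)/3)) 3, ← Real.rpow_mul hν0.le]
    norm_num
  have hw5 : w ^ (5 : ℕ) = ν ^ ((5 : ℝ) / 3) := by
    rw [hw, ← Real.rpow_natCast (ν ^ ((1:ℝ)/3)) 5, ← Real.rpow_mul hν0.le]
    norm_num
  have hu2 : u ^ (2 : ℕ) = (2 : ℝ) ^ ((m : ℝ) / 3) := by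
    rw [hu, ← Real.rpow_natCast (t ^ ((1:ℝ)/6)) 2, ← Real.rpow_mul ht0.le, ht,
      ← Real.rpow_natCast 2 m, ← Real.rpow_mul (by norm_num : (0:ℝ) ≤ 2)]
    congr 1
    ring
  have hu3 : u ^ (3 : ℕ) = Real.sqrt t := by
    rw [Real.sqrt_eq_rpow, hu, ← Real.rpow_natCast (t ^ ((1:ℝ)/6)) 3, ← Real.rpow_mul ht0.le]
    norm_num
  have hu1 : (1 : ℝ) ≤ u := Real.one_le_rpow ht1 (by norm_num)
  -- reduce goal using u, w
  rw [show (30 : ℝ) * (n : ℝ) ^ ((5 : ℝ) / 3) / (2 : ℝ) ^ ((m : ℝ) / 3)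
      = 30 * w ^ (5 : ℕ) / u ^ (2 : ℕ) by rw [hw5, hu2]]
  by_cases hcase : N ≤ k
  · -- trivial bound: ‖Pop‖ ≤ ‖G k‖ ≤ 6 n
    have hb1 : ‖Pop π m (G k)‖ ≤ ‖G k‖ := by
      rw [hPop]
      have : ‖∑ j ∈ Finset.range N, (π Heis.C ^ j) (G k)‖ ≤ (N : ℝ) * ‖G k‖ := by
        refine (norm_sum_le _ _).trans ?_
        have : ∀ j ∈ Finset.range N, ‖(π Heis.C ^ j) (G k)‖ = ‖G k‖ := fun j _ =>
          (π Heis.C ^ j).norm_map (G k)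
        rw [Finset.sum_congr rfl this, Finset.sum_const, Finset.card_range, nsmul_eq_mul]
      calc ((2 : ℝ) ^ m)⁻¹ * ‖∑ j ∈ Finset.range N, (π Heis.C ^ j) (G k)‖
          ≤ ((2 : ℝ) ^ m)⁻¹ * ((N : ℝ) * ‖G k‖) := by
            exact mul_le_mul_of_nonneg_left this (by positivity)
        _ = ‖G k‖ := by
            rw [hN]; push_cast; field_simp
    have hb2 : ‖G k‖ ≤ 6 * ν := by
      refine (hfg _).trans ?_
      have h1 : Heis.wordLength (Heis.C ^ k) ≤ 2 * n + 2 * n + 2 * 0 + 2 := by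
        have := Heis.wordLength_le n n 0
        rwa [show n * n + 0 = k by rw [hk]; ring] at this
      have h2 : (Heis.wordLength (Heis.C ^ k) : ℝ) ≤ 4 * ν + 2 := by
        have : (Heis.wordLength (Heis.C ^ k) : ℝ) ≤ ((2 * n + 2 * n + 2 * 0 + 2 : ℕ) : ℝ) := by
          exact_mod_cast h1
        refine this.trans ?_
        push_cast; ring_nf; rfl
      have : (1 : ℝ) ≤ ν := by rw [hν]; exact_mod_cast hn
      linarith
    -- now 6ν ≤ 30 w^5 / u^2 since u ≤ w (as t ≤ ν²)
    have htν : t ≤ ν ^ 2 := by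
      rw [ht, hν]; exact_mod_cast hcase
    have huw : u ≤ w := by
      have h6 : u ^ (6:ℕ) ≤ w ^ (6:ℕ) := by
        rw [hu6, show w ^ (6:ℕ) = (w ^ (3:ℕ)) ^ (2:ℕ) by ring, hw3]; exact htν
      exact le_of_pow_le_pow_left₀ (by norm_num) hw0.le h6
    have key : 6 * ν * u ^ (2:ℕ) ≤ 30 * w ^ (5:ℕ) := by
      have : 6 * ν * u ^ (2:ℕ) ≤ 6 * ν * w ^ (2:ℕ) := by
        have := pow_le_pow_left₀ hu0.le huw 2
        nlinarith
      refine this.trans ?_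
      rw [← hw3]
      nlinarith [pow_pos hw0 5]
    rw [le_div_iff₀ (by positivity)]
    calc ‖Pop π m (G k)‖ * u ^ (2:ℕ) ≤ (6 * ν) * u ^ (2:ℕ) := by
          have := hb1.trans hb2
          exact mul_le_mul_of_nonneg_right this (by positivity)
      _ ≤ 30 * w ^ (5:ℕ) := key
  · -- cancellation bound
    push_neg at hcase
    have hkN : k ≤ N := hcase.le
    have hterm : ∀ j : ℕ, (π Heis.C ^ j) (G k) = G (k + j) - G j := by
      intro j
      have h : f (Heis.C ^ (j + k)) = (π Heis.C ^ j) (f (Heis.C ^ k)) + f (Heis.C ^ j) := by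
        rw [pow_add, hcoc, map_pow]
      have : G (k + j) = (π Heis.C ^ j) (G k) + G j := by
        rw [hG]; simpa [add_comm] using h
      rw [this]; abel
    have hsum : ∑ j ∈ Finset.range N, (π Heis.C ^ j) (G k)
        = ∑ j ∈ Finset.Ico N (k + N), G j - ∑ j ∈ Finset.Ico 0 k, G j := by
      have e1 : ∑ j ∈ Finset.range N, (π Heis.C ^ j) (G k)
          = ∑ j ∈ Finset.range N, G (k + j) - ∑ j ∈ Finset.range N, G j := by
        rw [← Finset.sum_sub_distrib]
        exact Finset.sum_congr rfl fun j _ => hterm j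
      have e2 : ∑ j ∈ Finset.range N, G (k + j) = ∑ j ∈ Finset.Ico k (k + N), G j := by
        rw [Finset.sum_Ico_eq_sum_range]
        simp
      have e3 : ∑ j ∈ Finset.Ico k (k + N), G j
          = ∑ j ∈ Finset.Ico k N, G j + ∑ j ∈ Finset.Ico N (k + N), G j :=
        (Finset.sum_Ico_consecutive G hkN (by omega)).symm
      have e4 : ∑ j ∈ Finset.range N, G j
          = ∑ j ∈ Finset.Ico 0 k, G j + ∑ j ∈ Finset.Ico k N, G j := by
        rw [Finset.range_eq_Ico, ← Finset.sum_Ico_consecutive G (Nat.zero_le k) hkN]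
      rw [e1, e2, e3, e4]; abel
    set M : ℝ := 6 * ((Nat.sqrt (k + N) : ℝ) + 1) with hM
    have hM0 : 0 ≤ M := by positivity
    have hGM : ∀ j : ℕ, j < k + N → ‖G j‖ ≤ M := by
      intro j hj
      refine (hGnorm j).trans ?_
      have : Nat.sqrt j ≤ Nat.sqrt (k + N) := Nat.sqrt_le_sqrt hj.le
      have : (Nat.sqrt j : ℝ) ≤ (Nat.sqrt (k + N) : ℝ) := by exact_mod_cast this
      rw [hM]; linarith
    have hnorm1 : ‖∑ j ∈ Finset.Ico N (k + N), G j‖ ≤ (k : ℝ) * M := by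
      refine (norm_sum_le _ _).trans ?_
      have : ∀ j ∈ Finset.Ico N (k + N), ‖G j‖ ≤ M := by
        intro j hj
        rw [Finset.mem_Ico] at hj
        exact hGM j hj.2
      refine (Finset.sum_le_card_nsmul _ _ _ this).trans ?_
      rw [Nat.card_Ico, nsmul_eq_mul]
      gcongr <;> simp
    have hnorm2 : ‖∑ j ∈ Finset.Ico 0 k, G j‖ ≤ (k : ℝ) * M := by
      refine (norm_sum_le _ _).trans ?_
      have : ∀ j ∈ Finset.Ico 0 k, ‖G j‖ ≤ M := by
        intro j hj
        rw [Finset.mem_Ico] at hj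
        exact hGM j (by omega)
      refine (Finset.sum_le_card_nsmul _ _ _ this).trans ?_
      rw [Nat.card_Ico, nsmul_eq_mul]
      gcongr <;> simp
    have hStot : ‖∑ j ∈ Finset.range N, (π Heis.C ^ j) (G k)‖ ≤ 2 * (k : ℝ) * M := by
      rw [hsum]
      calc ‖∑ j ∈ Finset.Ico N (k + N), G j - ∑ j ∈ Finset.Ico 0 k, G j‖
          ≤ ‖∑ j ∈ Finset.Ico N (k + N), G j‖ + ‖∑ j ∈ Finset.Ico 0 k, G j‖ :=
            norm_sub_le _ _
        _ ≤ 2 * (k : ℝ) * M := by linarith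
    -- bound M by 15 * u^3
    have hMu : M ≤ 15 * u ^ (3 : ℕ) := by
      have h1 : (Nat.sqrt (k + N) : ℝ) ≤ Real.sqrt ((k + N : ℕ) : ℝ) :=
        Real.nat_sqrt_le_real_sqrt
      have h2 : Real.sqrt ((k + N : ℕ) : ℝ) ≤ Real.sqrt (2 * t) := by
        apply Real.sqrt_le_sqrt
        rw [ht, hN]
        push_cast
        have : (k : ℝ) ≤ (2:ℝ) ^ m := by
          exact_mod_cast hcase.le
        push_cast at this
        linarith
      have h3 : Real.sqrt (2 * t) = Real.sqrt 2 * Real.sqrt t := Real.sqrt_mul (by norm_num) _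
      have h4 : Real.sqrt 2 ≤ 1.5 := by
        rw [show (1.5 : ℝ) = Real.sqrt (1.5 ^ 2) by rw [Real.sqrt_sq]; norm_num]
        apply Real.sqrt_le_sqrt; norm_num
      have h5 : (1 : ℝ) ≤ Real.sqrt t := by
        rw [← hu3]; nlinarith
      have h6 : 0 ≤ Real.sqrt t := by positivity
      rw [hM, hu3]
      nlinarith
    -- assemble
    have hfinal : ‖Pop π m (G k)‖ ≤ 30 * ν ^ (2:ℕ) / u ^ (3:ℕ) := by
      rw [hPop]
      have hkν : (k : ℝ) = ν ^ (2:ℕ) := by rw [hν, hk]; push_cast; ring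
      calc ((2 : ℝ) ^ m)⁻¹ * ‖∑ j ∈ Finset.range N, (π Heis.C ^ j) (G k)‖
          ≤ ((2 : ℝ) ^ m)⁻¹ * (2 * (k : ℝ) * (15 * u ^ (3:ℕ))) := by
            have hb : 2 * (k : ℝ) * M ≤ 2 * (k : ℝ) * (15 * u ^ (3:ℕ)) := by
              apply mul_le_mul_of_nonneg_left hMu (by positivity)
            exact mul_le_mul_of_nonneg_left (hStot.trans hb) (by positivity)
        _ = 30 * ν ^ (2:ℕ) / u ^ (3:ℕ) := by
            rw [hkν, ← ht, ← hu6]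
            field_simp
            ring
    refine hfinal.trans ?_
    -- 30 ν² / u³ ≤ 30 w⁵ / u² since w ≤ u
    have hνt : ν ^ 2 ≤ t := by
      rw [ht, hν]
      have : (k : ℝ) ≤ (N : ℝ) := by exact_mod_cast hkN
      rw [hk, hN] at this; push_cast at this; linarith
    have hwu : w ≤ u := by
      have h6 : w ^ (6:ℕ) ≤ u ^ (6:ℕ) := by
        rw [hu6, show w ^ (6:ℕ) = (w ^ (3:ℕ)) ^ (2:ℕ) by ring, hw3]; exact hνt
      exact le_of_pow_le_pow_left₀ (by norm_num) hu0.le h6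
    rw [div_le_div_iff₀ (by positivity) (by positivity)]
    have hν6 : ν ^ (2:ℕ) = w ^ (6:ℕ) := by
      rw [show w ^ (6:ℕ) = (w ^ (3:ℕ)) ^ (2:ℕ) by ring, hw3]
    rw [hν6]
    nlinarith [pow_pos hw0 5, pow_pos hu0 2, mul_le_mul_of_nonneg_left hwu
      (by positivity : (0:ℝ) ≤ 30 * w ^ (5:ℕ) * u ^ (2:ℕ))]
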